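/- For every m ≥ 1 and M = 2^⌈m/512⌉ there exists a sequence of m bipartitions (A_i, B_i), i = 1,...,m, of {1,...,M} such that |A_i| = |B_i| = M/2 for all i, and for every pair of distinct elements t, t' ∈ {1,...,M} there are at most (1/2 + 1/16)·m = 9m/16 indices i for which t and t' lie in the same part of (A_i, B_i). -/

import Mathlib

open Finset

namespace Stmt1Aux

abbrev V (n : ℕ) := Fin n → ZMod 2

def dot {n : ℕ} (a b : V n) : ZMod 2 := ∑ j, a j * b j

lemma dot_comm {n : ℕ} (a b : V n) : dot a b = dot b a :=
  Finset.sum_congr rfl fun j _ => mul_comm _ _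

lemma dot_add_right {n : ℕ} (a b c : V n) : dot a (b + c) = dot a b + dot a c := by
  unfold dot
  rw [← Finset.sum_add_distrib]
  exact Finset.sum_congr rfl fun j _ => by simp [mul_add]

lemma exists_coord {n : ℕ} (d : V n) (hd : d ≠ 0) : ∃ j, d j = 1 := by
  obtain ⟨j, hj⟩ := Function.ne_iff.1 hd
  refine ⟨j, ?_⟩
  have h0 : d j ≠ 0 := by simpa using hj
  revert h0; generalize d j = a; revert a; decide

lemma dot_single {n : ℕ} (j : Fin n) (d : V n) : dot (Pi.single j 1) d = d j := by
  unfold dot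
  rw [Finset.sum_eq_single j]
  · simp
  · intro k _ hk; simp [Pi.single_apply, hk]
  · simp

/-- number of `v` with `dot v d = 0` for `d ≠ 0`. -/
lemma card_ker {n : ℕ} (d : V n) (hd : d ≠ 0) :
    (univ.filter fun v : V n => dot v d = 0).card = 2 ^ (n - 1) := by
  obtain ⟨j, hj⟩ := exists_coord d hd
  have hn : 1 ≤ n := Nat.one_le_iff_ne_zero.2 (by rintro rfl; exact j.elim0)
  set u : V n := Pi.single j 1 with hu
  have hdu : ∀ v : V n, dot (v + u) d = dot v d + 1 := by
    intro v
    have h1 : dot (v + u) d = dot d v + dot d u := by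
      rw [dot_comm, dot_add_right]
    rw [h1, dot_comm d u, hu, dot_single, hj, dot_comm]
  have hbij : (univ.filter fun v : V n => dot v d = 0).card
      = (univ.filter fun v : V n => ¬ dot v d = 0).card := by
    apply Finset.card_equiv (Equiv.addRight u)
    intro v
    simp only [mem_filter, mem_univ, true_and, Equiv.coe_addRight]
    rw [hdu v]
    generalize dot v d = a
    revert a; decide
  have hsum : (univ.filter fun v : V n => dot v d = 0).card
      + (univ.filter fun v : V n => ¬ dot v d = 0).card = 2 ^ n := by
    rw [Finset.card_filter_add_card_filter_not, card_univ]
    simp [Fintype.card_fun]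
  have h2 : 2 ^ n = 2 * 2 ^ (n - 1) := by
    conv_lhs => rw [show n = (n - 1) + 1 by omega]
    ring
  omega

lemma fourThree_mono (q p N : ℕ) (hqp : q ≤ p) (hpN : p ≤ N) :
    4 ^ q * 3 ^ (N - q) ≤ 4 ^ p * 3 ^ (N - p) := by
  obtain ⟨k, rfl⟩ := Nat.exists_eq_add_of_le hqp
  have hN : N - q = (N - (q + k)) + k := by omega
  calc 4 ^ q * 3 ^ (N - q) = 4 ^ q * 3 ^ (N - (q + k)) * 3 ^ k := by rw [hN, pow_add]; ring
    _ ≤ 4 ^ q * 3 ^ (N - (q + k)) * 4 ^ k :=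
        Nat.mul_le_mul_left _ (Nat.pow_le_pow_left (by norm_num) k)
    _ = 4 ^ (q + k) * 3 ^ (N - (q + k)) := by rw [pow_add]; ring

/-- The key numeric inequality. -/
lemma key (n m T : ℕ) (hm : 513 ≤ m) (hT16 : 9 * m + 1 ≤ 16 * T) (hTm : T ≤ m)
    (h512 : 512 * n ≤ m + 511) :
    2 ^ n * 7 ^ m < 2 ^ m * (4 ^ T * 3 ^ (m - T)) := by
  have hbase : 4 * 7 ^ 512 < 2 ^ 1088 * 3 ^ 224 := by decide +kernel
  have hpow : (2 ^ n * 7 ^ m) ^ 512 < (2 ^ m * (4 ^ T * 3 ^ (m - T))) ^ 512 := by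
    have hL : (2 ^ n * 7 ^ m) ^ 512 ≤ (4 * 7 ^ 512) ^ m := by
      calc (2 ^ n * 7 ^ m) ^ 512 = 2 ^ (512 * n) * 7 ^ (512 * m) := by
            rw [mul_pow, ← pow_mul, ← pow_mul]; ring_nf
        _ ≤ 2 ^ (2 * m) * 7 ^ (512 * m) :=
            Nat.mul_le_mul_right _ (Nat.pow_le_pow_right (by norm_num) (by omega))
        _ = (4 * 7 ^ 512) ^ m := by rw [mul_pow, pow_mul, pow_mul]; norm_num
    have hR : (2 ^ 1088 * 3 ^ 224) ^ m ≤ (2 ^ m * (4 ^ T * 3 ^ (m - T))) ^ 512 := by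
      calc (2 ^ 1088 * 3 ^ 224) ^ m
          = 2 ^ (512 * m) * (2 ^ (576 * m) * 3 ^ (224 * m)) := by
            rw [← mul_assoc, ← pow_add, mul_pow, ← pow_mul, ← pow_mul]; ring_nf
        _ = 2 ^ (512 * m) * (4 ^ (288 * m) * 3 ^ (512 * m - 288 * m)) := by
            rw [show (4:ℕ) = 2 ^ 2 from by norm_num, ← pow_mul,
              show 2 * (288 * m) = 576 * m from by ring,
              show 512 * m - 288 * m = 224 * m from by omega]
        _ ≤ 2 ^ (512 * m) * (4 ^ (512 * T) * 3 ^ (512 * m - 512 * T)) :=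
            Nat.mul_le_mul_left _ (fourThree_mono _ _ _ (by omega) (by omega))
        _ = (2 ^ m * (4 ^ T * 3 ^ (m - T))) ^ 512 := by
            rw [mul_pow, mul_pow, ← pow_mul, ← pow_mul, ← pow_mul,
              show m * 512 = 512 * m from by ring, show T * 512 = 512 * T from by ring,
              show (m - T) * 512 = 512 * m - 512 * T from by omega]
    calc (2 ^ n * 7 ^ m) ^ 512 ≤ (4 * 7 ^ 512) ^ m := hL
      _ < (2 ^ 1088 * 3 ^ 224) ^ m := Nat.pow_lt_pow_left hbase (by omega)
      _ ≤ (2 ^ m * (4 ^ T * 3 ^ (m - T))) ^ 512 := hR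
  by_contra hcon
  push_neg at hcon
  exact absurd (Nat.pow_le_pow_left hcon 512) (not_le.2 hpow)

/-- the number of indices `i` where `x i` is orthogonal to `d`. -/
def cnt {n m : ℕ} (x : Fin m → V n) (d : V n) : ℕ :=
  (univ.filter fun i => dot (x i) d = 0).card

lemma prod_weight {n m : ℕ} (x : Fin m → V n) (d : V n) :
    ∏ i, (if dot (x i) d = 0 then (4:ℕ) else 3) = 4 ^ cnt x d * 3 ^ (m - cnt x d) := by
  rw [← Finset.prod_filter_mul_prod_filter_not univ (fun i => dot (x i) d = 0)]
  have hcnot : (univ.filter fun i => ¬ dot (x i) d = 0).card = m - cnt x d := by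
    have h := Finset.card_filter_add_card_filter_not
      (s := (univ : Finset (Fin m))) (fun i => dot (x i) d = 0)
    have h2 : cnt x d = (univ.filter fun i => dot (x i) d = 0).card := rfl
    simp only [card_univ, Fintype.card_fin] at h
    omega
  have h4 : ∏ i ∈ univ.filter (fun i => dot (x i) d = 0),
      (if dot (x i) d = 0 then (4:ℕ) else 3) = 4 ^ cnt x d := by
    rw [Finset.prod_congr rfl (g := fun _ => (4:ℕ))
      (fun i hi => if_pos (Finset.mem_filter.1 hi).2), Finset.prod_const]
    rfl
  have h3 : ∏ i ∈ univ.filter (fun i => ¬ dot (x i) d = 0),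
      (if dot (x i) d = 0 then (4:ℕ) else 3) = 3 ^ (m - cnt x d) := by
    rw [Finset.prod_congr rfl (g := fun _ => (3:ℕ))
      (fun i hi => if_neg (Finset.mem_filter.1 hi).2), Finset.prod_const, hcnot]
  rw [h4, h3]

lemma sum_weight {n : ℕ} (d : V n) (hd : d ≠ 0) :
    ∑ v ∈ (univ \ {0} : Finset (V n)), (if dot v d = 0 then (4:ℕ) else 3)
      = 7 * 2 ^ (n - 1) - 4 := by
  have hn : 1 ≤ n := by
    obtain ⟨j, _⟩ := exists_coord d hd
    exact Nat.one_le_iff_ne_zero.2 (by rintro rfl; exact j.elim0)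
  have h2n1 : (1:ℕ) ≤ 2 ^ (n - 1) := Nat.one_le_two_pow
  have h2n : (2:ℕ) ^ n = 2 * 2 ^ (n - 1) := by
    conv_lhs => rw [show n = (n - 1) + 1 by omega]
    ring
  set W : Finset (V n) := univ \ {0} with hW
  have hcardW : W.card = 2 ^ n - 1 := by
    rw [hW, card_sdiff_of_subset (by simp), card_univ, card_singleton]
    simp [Fintype.card_fun]
  have hker : (W.filter fun v => dot v d = 0).card = 2 ^ (n - 1) - 1 := by
    have hWf : W.filter (fun v => dot v d = 0)
        = (univ.filter fun v : V n => dot v d = 0) \ {0} := by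
      ext v
      simp only [hW, mem_filter, mem_sdiff, mem_univ, true_and, mem_singleton]
      tauto
    have h0mem : ({0} : Finset (V n)) ⊆ univ.filter fun v : V n => dot v d = 0 := by
      intro v hv
      rw [mem_singleton] at hv
      subst hv
      rw [mem_filter]; exact ⟨mem_univ _, by simp [dot]⟩
    rw [hWf, card_sdiff_of_subset h0mem, card_ker d hd, card_singleton]
  have hsplit : (W.filter fun v => dot v d = 0).card
      + (W.filter fun v => ¬ dot v d = 0).card = W.card :=
    Finset.card_filter_add_card_filter_not _
  rw [Finset.sum_ite, Finset.sum_const, Finset.sum_const, smul_eq_mul, smul_eq_mul, hker]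
  have : (W.filter fun v => ¬ dot v d = 0).card = 2 ^ (n - 1) := by omega
  rw [this]
  omega

lemma bound_d {n m T : ℕ} (hTm : T ≤ m) (d : V n) (hd : d ≠ 0) :
    ((Fintype.piFinset fun _ : Fin m => (univ \ {0} : Finset (V n))).filter
        fun x => T ≤ cnt x d).card * (4 ^ T * 3 ^ (m - T))
      ≤ (7 * 2 ^ (n - 1) - 4) ^ m := by
  have step1 : ((Fintype.piFinset fun _ : Fin m => (univ \ {0} : Finset (V n))).filter
        fun x => T ≤ cnt x d).card * (4 ^ T * 3 ^ (m - T))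
      = ∑ _x ∈ (Fintype.piFinset fun _ : Fin m => (univ \ {0} : Finset (V n))).filter
          (fun x => T ≤ cnt x d), 4 ^ T * 3 ^ (m - T) := by
    rw [Finset.sum_const, smul_eq_mul]
  have step2 : ∑ _x ∈ (Fintype.piFinset fun _ : Fin m => (univ \ {0} : Finset (V n))).filter
          (fun x => T ≤ cnt x d), 4 ^ T * 3 ^ (m - T)
      ≤ ∑ x ∈ (Fintype.piFinset fun _ : Fin m => (univ \ {0} : Finset (V n))).filter
          (fun x => T ≤ cnt x d), ∏ i, (if dot (x i) d = 0 then (4:ℕ) else 3) := by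
    apply Finset.sum_le_sum
    intro x hx
    have hxT : T ≤ cnt x d := (Finset.mem_filter.1 hx).2
    have hcm : cnt x d ≤ m := by
      have := Finset.card_filter_le (univ : Finset (Fin m)) (fun i => dot (x i) d = 0)
      simpa [cnt] using this
    rw [prod_weight]
    exact fourThree_mono T (cnt x d) m hxT hcm
  have step3 : ∑ x ∈ (Fintype.piFinset fun _ : Fin m => (univ \ {0} : Finset (V n))).filter
          (fun x => T ≤ cnt x d), ∏ i, (if dot (x i) d = 0 then (4:ℕ) else 3)
      ≤ ∑ x ∈ Fintype.piFinset fun _ : Fin m => (univ \ {0} : Finset (V n)),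
          ∏ i, (if dot (x i) d = 0 then (4:ℕ) else 3) :=
    Finset.sum_le_sum_of_subset (Finset.filter_subset _ _)
  have step4 : ∑ x ∈ Fintype.piFinset fun _ : Fin m => (univ \ {0} : Finset (V n)),
          ∏ i, (if dot (x i) d = 0 then (4:ℕ) else 3)
      = (∑ v ∈ (univ \ {0} : Finset (V n)), (if dot v d = 0 then (4:ℕ) else 3)) ^ m :=
    (Finset.sum_pow' (univ \ {0}) (fun v => if dot v d = 0 then (4:ℕ) else 3) m).symm
  rw [sum_weight d hd] at step4
  rw [step1]
  exact le_of_le_of_eq (step2.trans step3) step4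

lemma exists_good {n m : ℕ} (hn : 1 ≤ n) (hm : 1 ≤ m) (h512 : 512 * n ≤ m + 511) :
    ∃ x : Fin m → V n, (∀ i, x i ≠ 0) ∧
      ∀ d : V n, d ≠ 0 → 16 * cnt x d ≤ 9 * m := by
  rcases eq_or_lt_of_le hn with h1 | hn2
  · -- n = 1 : take the constant vector 1
    refine ⟨fun _ _ => 1, fun i h0 => ?_, fun d hd => ?_⟩
    · have := congrFun h0 ⟨0, by omega⟩
      simp at this
    · obtain ⟨j, hj⟩ := exists_coord d hd
      have hdot : ∀ i : Fin m, ¬ dot (fun _ => (1 : ZMod 2)) d = 0 := by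
        intro i
        have h2 : dot (fun _ => (1 : ZMod 2)) d = ∑ k, d k := by
          unfold dot; exact Finset.sum_congr rfl fun k _ => one_mul _
        have huniv : (univ : Finset (Fin n)) = {j} := by
          apply Finset.eq_singleton_iff_unique_mem.2
          refine ⟨mem_univ j, fun k _ => ?_⟩
          have hk := k.isLt
          have hjlt := j.isLt
          apply Fin.ext
          omega
        rw [h2, huniv, Finset.sum_singleton, hj]
        decide
      unfold cnt
      rw [Finset.filter_false_of_mem fun i _ => hdot i, Finset.card_empty]
      omega
  · -- n ≥ 2, hence m ≥ 513 : counting argument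
    have hm513 : 513 ≤ m := by omega
    have h2n1 : (1:ℕ) ≤ 2 ^ (n - 1) := Nat.one_le_two_pow
    have h2n : (2:ℕ) ^ n = 2 * 2 ^ (n - 1) := by
      conv_lhs => rw [show n = (n - 1) + 1 by omega]
      ring
    set T : ℕ := 9 * m / 16 + 1 with hT
    have hT16 : 9 * m + 1 ≤ 16 * T := by omega
    have hTm : T ≤ m := by omega
    have hcardW : (univ \ {0} : Finset (V n)).card = 2 ^ n - 1 := by
      rw [card_sdiff_of_subset (by simp), card_univ, card_singleton]
      simp [Fintype.card_fun]
    have hcardP : (Fintype.piFinset fun _ : Fin m => (univ \ {0} : Finset (V n))).card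
        = (2 ^ n - 1) ^ m := by
      rw [Fintype.card_piFinset_const, hcardW]
    -- union bound
    have hBUcard : ((univ \ {0} : Finset (V n)).biUnion
          (fun d => (Fintype.piFinset fun _ : Fin m => (univ \ {0} : Finset (V n))).filter
            (fun x => T ≤ cnt x d))).card * (4 ^ T * 3 ^ (m - T))
        ≤ (2 ^ n - 1) * (7 * 2 ^ (n - 1) - 4) ^ m := by
      calc ((univ \ {0} : Finset (V n)).biUnion
            (fun d => (Fintype.piFinset fun _ : Fin m => (univ \ {0} : Finset (V n))).filter
              (fun x => T ≤ cnt x d))).card * (4 ^ T * 3 ^ (m - T))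
          ≤ (∑ d ∈ (univ \ {0} : Finset (V n)),
              ((Fintype.piFinset fun _ : Fin m => (univ \ {0} : Finset (V n))).filter
                (fun x => T ≤ cnt x d)).card) * (4 ^ T * 3 ^ (m - T)) :=
            Nat.mul_le_mul_right _ Finset.card_biUnion_le
        _ = ∑ d ∈ (univ \ {0} : Finset (V n)),
              ((Fintype.piFinset fun _ : Fin m => (univ \ {0} : Finset (V n))).filter
                (fun x => T ≤ cnt x d)).card * (4 ^ T * 3 ^ (m - T)) := by
            rw [Finset.sum_mul]
        _ ≤ ∑ _d ∈ (univ \ {0} : Finset (V n)), (7 * 2 ^ (n - 1) - 4) ^ m :=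
            Finset.sum_le_sum fun d hd => bound_d hTm d (by simpa using hd)
        _ = (2 ^ n - 1) * (7 * 2 ^ (n - 1) - 4) ^ m := by
            rw [Finset.sum_const, smul_eq_mul, hcardW]
    -- numeric comparison
    have hkey := key n m T hm513 hT16 hTm h512
    have hnum : (2 ^ n - 1) * (7 * 2 ^ (n - 1) - 4) ^ m
        < (4 ^ T * 3 ^ (m - T)) * (2 ^ n - 1) ^ m := by
      have h2S : 2 * (7 * 2 ^ (n - 1) - 4) ≤ 7 * (2 ^ n - 1) := by omega
      have hposW : 0 < 2 ^ n - 1 := by omega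
      have hchain : 2 ^ m * ((2 ^ n - 1) * (7 * 2 ^ (n - 1) - 4) ^ m)
          < 2 ^ m * ((4 ^ T * 3 ^ (m - T)) * (2 ^ n - 1) ^ m) := by
        calc 2 ^ m * ((2 ^ n - 1) * (7 * 2 ^ (n - 1) - 4) ^ m)
            = (2 ^ n - 1) * (2 * (7 * 2 ^ (n - 1) - 4)) ^ m := by rw [mul_pow]; ring
          _ ≤ (2 ^ n - 1) * (7 * (2 ^ n - 1)) ^ m :=
              Nat.mul_le_mul_left _ (Nat.pow_le_pow_left h2S m)
          _ = (2 ^ n - 1) * 7 ^ m * (2 ^ n - 1) ^ m := by rw [mul_pow]; ring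
          _ ≤ 2 ^ n * 7 ^ m * (2 ^ n - 1) ^ m :=
              Nat.mul_le_mul_right _ (Nat.mul_le_mul_right _ (by omega))
          _ < 2 ^ m * (4 ^ T * 3 ^ (m - T)) * (2 ^ n - 1) ^ m :=
              Nat.mul_lt_mul_of_lt_of_le hkey (le_refl _) (Nat.pow_pos hposW)
          _ = 2 ^ m * ((4 ^ T * 3 ^ (m - T)) * (2 ^ n - 1) ^ m) := by ring
      exact Nat.lt_of_mul_lt_mul_left hchain
    have hX : 0 < 4 ^ T * 3 ^ (m - T) :=
      Nat.mul_pos (Nat.pow_pos (by norm_num)) (Nat.pow_pos (by norm_num))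
    have hcardlt : ((univ \ {0} : Finset (V n)).biUnion
          (fun d => (Fintype.piFinset fun _ : Fin m => (univ \ {0} : Finset (V n))).filter
            (fun x => T ≤ cnt x d))).card
        < (Fintype.piFinset fun _ : Fin m => (univ \ {0} : Finset (V n))).card := by
      rw [hcardP]
      refine Nat.lt_of_mul_lt_mul_right (a := 4 ^ T * 3 ^ (m - T)) ?_
      calc _ ≤ (2 ^ n - 1) * (7 * 2 ^ (n - 1) - 4) ^ m := hBUcard
        _ < (4 ^ T * 3 ^ (m - T)) * (2 ^ n - 1) ^ m := hnum
        _ = (2 ^ n - 1) ^ m * (4 ^ T * 3 ^ (m - T)) := by ring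
    have hBUsub : ((univ \ {0} : Finset (V n)).biUnion
          (fun d => (Fintype.piFinset fun _ : Fin m => (univ \ {0} : Finset (V n))).filter
            (fun x => T ≤ cnt x d)))
        ⊆ Fintype.piFinset fun _ : Fin m => (univ \ {0} : Finset (V n)) :=
      Finset.biUnion_subset.2 fun d _ => Finset.filter_subset _ _
    have hne : ((Fintype.piFinset fun _ : Fin m => (univ \ {0} : Finset (V n)))
        \ ((univ \ {0} : Finset (V n)).biUnion
          (fun d => (Fintype.piFinset fun _ : Fin m => (univ \ {0} : Finset (V n))).filter
            (fun x => T ≤ cnt x d)))).Nonempty := by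
      rw [← Finset.card_pos, Finset.card_sdiff_of_subset hBUsub]
      omega
    obtain ⟨x, hx⟩ := hne
    obtain ⟨hxP, hxB⟩ := Finset.mem_sdiff.1 hx
    have hxW : ∀ i, x i ∈ (univ \ {0} : Finset (V n)) := fun i => Fintype.mem_piFinset.1 hxP i
    refine ⟨x, fun i => by simpa using hxW i, fun d hd => ?_⟩
    have hnotT : ¬ T ≤ cnt x d := by
      intro hTc
      exact hxB (Finset.mem_biUnion.2 ⟨d, by simpa using hd, Finset.mem_filter.2 ⟨hxP, hTc⟩⟩)
    omega

end Stmt1Aux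

namespace Stmt1Aux

lemma card_filter_comp_equiv {α β : Type*} [Fintype α] [Fintype β] [DecidableEq β]
    (e : α ≃ β) (p : β → Prop) [DecidablePred p] :
    (univ.filter fun a => p (e a)).card = (univ.filter p).card := by
  apply Finset.card_equiv e
  intro a
  simp

end Stmt1Aux

/-- For every `m ≥ 1` and `M = 2 ^ ⌈m/512⌉` there is a sequence of `m` bipartitions
`(A i, (A i)ᶜ)` of `Fin M`, each with parts of size `M/2`, such that every pair of
distinct elements `t ≠ t'` lies in the same part for at most `9m/16` indices `i`. -/
theorem stmt1 (m : ℕ) (hm : 1 ≤ m) (M : ℕ) (hM : M = 2 ^ ⌈(m : ℚ) / 512⌉₊) :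
    ∃ A : Fin m → Finset (Fin M),
      (∀ i, (A i).card = M / 2 ∧ (A i)ᶜ.card = M / 2) ∧
      ∀ t t' : Fin M, t ≠ t' →
        (((Finset.univ : Finset (Fin m)).filter
            (fun i => (t ∈ A i ↔ t' ∈ A i))).card : ℚ) ≤ (1 / 2 + 1 / 16) * m := by
  open Stmt1Aux Finset in
  set n := ⌈(m : ℚ) / 512⌉₊ with hn
  have hn1 : 1 ≤ n := Nat.ceil_pos.mpr (by positivity)
  have h512 : 512 * n ≤ m + 511 := by
    have h : ((n : ℚ)) < (m : ℚ) / 512 + 1 := by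
      rw [hn]
      exact Nat.ceil_lt_add_one (by positivity)
    have h3 : ((512 * n : ℕ) : ℚ) < ((m + 512 : ℕ) : ℚ) := by push_cast; linarith
    have h4 := Nat.cast_lt.mp h3
    omega
  obtain ⟨x, hx0, hxd⟩ := Stmt1Aux.exists_good hn1 hm h512
  have hcard : Fintype.card (V n) = M := by
    rw [hM]
    simp [Fintype.card_fun]
  let e : Fin M ≃ V n := (Fintype.equivFinOfCardEq hcard).symm
  have hM2 : M = 2 * 2 ^ (n - 1) := by
    rw [hM]
    conv_lhs => rw [show n = n - 1 + 1 by omega]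
    ring
  refine ⟨fun i => univ.filter (fun t => dot (x i) (e t) = 0), fun i => ?_, fun t t' htt => ?_⟩
  · have hA : (univ.filter (fun t : Fin M => dot (x i) (e t) = 0)).card = 2 ^ (n - 1) := by
      rw [card_filter_comp_equiv e (fun v => dot (x i) v = 0)]
      have hsw : (univ.filter fun v : V n => dot (x i) v = 0)
          = (univ.filter fun v : V n => dot v (x i) = 0) := by
        apply Finset.filter_congr
        intro v _
        rw [dot_comm]
      rw [hsw, card_ker _ (hx0 i)]
    constructor
    · rw [hA]; omega
    · rw [Finset.card_compl, hA, Fintype.card_fin]; omega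
  · have hd : e t + e t' ≠ 0 := by
      intro h0
      apply htt
      apply e.injective
      have hz : ∀ a b : ZMod 2, a + b = 0 → a = b := by decide
      exact funext fun j => hz _ _ (congrFun h0 j)
    have hiff : ∀ i ∈ (univ : Finset (Fin m)),
        ((t ∈ univ.filter (fun s : Fin M => dot (x i) (e s) = 0)
          ↔ t' ∈ univ.filter (fun s : Fin M => dot (x i) (e s) = 0)))
        ↔ (dot (x i) (e t + e t') = 0) := by
      intro i _
      rw [Finset.mem_filter, Finset.mem_filter]
      simp only [Finset.mem_univ, true_and]
      rw [dot_add_right]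
      have hz : ∀ a b : ZMod 2, ((a = 0) ↔ (b = 0)) ↔ a + b = 0 := by decide
      exact hz _ _
    rw [Finset.filter_congr hiff]
    have hc := hxd (e t + e t') hd
    have hcnt : cnt x (e t + e t')
        = (univ.filter fun i : Fin m => dot (x i) (e t + e t') = 0).card := rfl
    rw [hcnt] at hc
    have hq : (16 : ℚ) * ((univ.filter fun i : Fin m => dot (x i) (e t + e t') = 0).card : ℚ)
        ≤ 9 * (m : ℚ) := by exact_mod_cast hc
    linarith
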